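/- If H is a star-critical graph with no simplicial vertex, then |V(H)| ≤ |S(H)|. -/

import Mathlib

open SimpleGraph

/-- An induced star of `H` with center `v` and leaf set `L`: `L` is a nonempty
independent set of neighbors of `v`. -/
def IsStar {V : Type*} (H : SimpleGraph V) (v : V) (L : Set V) : Prop :=
  L.Nonempty ∧ (∀ u ∈ L, H.Adj v u) ∧ ∀ u ∈ L, ∀ w ∈ L, ¬ H.Adj u w

/-- `S` is the vertex set of an induced star of `H`. -/
def IsStarSet {V : Type*} (H : SimpleGraph V) (S : Set V) : Prop :=
  ∃ v L, IsStar H v L ∧ S = insert v L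

/-- `S` is the vertex set of a maximal induced star of `H`. -/
def IsMaxStarSet {V : Type*} (H : SimpleGraph V) (S : Set V) : Prop :=
  IsStarSet H S ∧ ∀ T, IsStarSet H T → S ⊆ T → S = T

/-- The set of (vertex sets of) maximal induced stars of `H`. -/
def maxStars {V : Type*} (H : SimpleGraph V) : Set (Set V) := {S | IsMaxStarSet H S}

/-- The star graph of `H`: the intersection graph of the maximal induced stars of `H`. -/
def starGraph {V : Type*} (H : SimpleGraph V) : SimpleGraph ↥(maxStars H) :=
  SimpleGraph.fromRel fun S T => ((S : Set V) ∩ (T : Set V)).Nonempty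

/-- A vertex of `H` is star-critical if removing it changes the star graph up to
isomorphism; `H` is star-critical if all its vertices are. -/
def StarCritical {V : Type*} (H : SimpleGraph V) : Prop :=
  ∀ v : V, ¬ Nonempty (_root_.starGraph (H.induce ({v}ᶜ : Set V)) ≃g _root_.starGraph H)

lemma exists_max_star {V : Type*} [Fintype V] (H : SimpleGraph V)
    (hsimp : ∀ v : V, ¬ H.IsClique (H.neighborSet v)) (v : V) :
    ∃ L : Set V, IsMaxStarSet H (insert v L) ∧ L ⊆ H.neighborSet v ∧
      (∀ u ∈ L, ∀ w ∈ L, ¬ H.Adj u w) ∧ ∃ a ∈ L, ∃ b ∈ L, a ≠ b := by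
  classical
  have h := hsimp v
  rw [SimpleGraph.isClique_iff, Set.Pairwise] at h
  push_neg at h
  obtain ⟨a, ha, b, hb, hab, hnadj⟩ := h
  -- family of candidate leaf sets
  set F : Set (Set V) := {L | L ⊆ H.neighborSet v ∧ a ∈ L ∧ b ∈ L ∧
    ∀ u ∈ L, ∀ w ∈ L, ¬ H.Adj u w} with hF
  have habF : ({a, b} : Set V) ∈ F := by
    refine ⟨?_, by simp, by simp, ?_⟩
    · intro x hx
      rcases hx with rfl | rfl
      · exact ha
      · exact hb
    · intro u hu w hw
      rcases hu with rfl | rfl <;> rcases hw with rfl | rfl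
      · exact H.irrefl
      · exact hnadj
      · exact fun h' => hnadj h'.symm
      · exact H.irrefl
  obtain ⟨L, hLF, hmax⟩ := Set.Finite.exists_maximalFor Set.ncard F (Set.toFinite F)
    ⟨{a, b}, habF⟩
  obtain ⟨hLN, haL, hbL, hLind⟩ := hLF
  -- maximality of L as independent subset of N(v)
  have hLmax : ∀ x ∈ H.neighborSet v, x ∉ L → ∃ y ∈ L, H.Adj x y := by
    intro x hxN hxL
    by_contra hno
    push_neg at hno
    have hins : insert x L ∈ F := by
      refine ⟨Set.insert_subset hxN hLN, Set.mem_insert_of_mem _ haL,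
        Set.mem_insert_of_mem _ hbL, ?_⟩
      intro u hu w hw
      rcases hu with rfl | hu <;> rcases hw with rfl | hw
      · exact H.irrefl
      · exact hno w hw
      · exact fun h' => hno u hu h'.symm
      · exact hLind u hu w hw
    have hlt : L.ncard < (insert x L).ncard := by
      rw [Set.ncard_insert_of_notMem hxL (Set.toFinite L)]
      omega
    have := hmax hins (le_of_lt hlt)
    omega
  have hvL : v ∉ L := fun h => H.irrefl (hLN h)
  refine ⟨L, ⟨⟨v, L, ⟨⟨a, haL⟩, fun u hu => hLN hu, hLind⟩, rfl⟩, ?_⟩, hLN, hLind,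
    a, haL, b, hbL, hab⟩
  -- maximality of the star set
  rintro T ⟨c, M, ⟨hMne, hMadj, hMind⟩, rfl⟩ hsub
  have hvc : v = c := by
    by_contra hvc
    have hvM : v ∈ M := by
      have := hsub (Set.mem_insert v L)
      rcases this with h | h
      · exact absurd h hvc
      · exact h
    have hkey : ∀ x ∈ L, x = c := by
      intro x hx
      have hxT : x ∈ insert c M := hsub (Set.mem_insert_of_mem _ hx)
      rcases hxT with rfl | hxM
      · rfl
      · exact absurd (hLN hx) (hMind v hvM x hxM)
    have := (hkey a haL).trans (hkey b hbL).symm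
    exact hab this
  subst hvc
  have hLM : L ⊆ M := by
    intro x hx
    have hxT : x ∈ insert v M := hsub (Set.mem_insert_of_mem _ hx)
    rcases hxT with rfl | hxM
    · exact absurd hx hvL
    · exact hxM
  have hML : M ⊆ L := by
    intro x hx
    by_contra hxL
    obtain ⟨y, hyL, hadj⟩ := hLmax x (hMadj x hx) hxL
    exact hMind x hx y (hLM hyL) hadj
  rw [Set.Subset.antisymm hLM hML]

/-- If `H` is star-critical and has no simplicial vertex, then `|V(H)| ≤ |S(H)|`. -/
theorem stmt3 {V : Type*} [Fintype V] (H : SimpleGraph V) (hcrit : StarCritical H)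
    (hsimp : ∀ v : V, ¬ H.IsClique (H.neighborSet v)) :
    Fintype.card V ≤ (maxStars H).ncard := by
  classical
  choose L hLmax hLN hLind a haL b hbL hab using exists_max_star H hsimp
  have hf : ∀ v : V, (insert v (L v) : Set V) ∈ maxStars H := fun v => hLmax v
  set f : V → ↥(maxStars H) := fun v => ⟨insert v (L v), hf v⟩ with hfdef
  have hinj : Function.Injective f := by
    intro v w hvw
    by_contra hne
    have heq : (insert v (L v) : Set V) = insert w (L w) := congrArg Subtype.val hvw
    have hvLw : v ∈ L w := by
      have : v ∈ insert w (L w) := heq ▸ Set.mem_insert v (L v)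
      rcases this with h | h
      · exact absurd h hne
      · exact h
    have hkey : ∀ x ∈ L v, x = w := by
      intro x hx
      have : x ∈ insert w (L w) := heq ▸ Set.mem_insert_of_mem _ hx
      rcases this with rfl | hxM
      · rfl
      · exact absurd (hLN v hx) (hLind w v hvLw x hxM)
    exact hab v ((hkey _ (haL v)).trans (hkey _ (hbL v)).symm)
  calc Fintype.card V = Nat.card V := (Nat.card_eq_fintype_card).symm
    _ ≤ Nat.card ↥(maxStars H) := Nat.card_le_card_of_injective f hinj
    _ = (maxStars H).ncard := Nat.card_coe_set_eq _
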